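/- Let k be a field of characteristic zero, let n ≥ 1, and let A be an integral domain containing k that is a unique factorization domain, whose fraction field has transcendence degree n+1 over k, and with A* = k*. Let D_1, …, D_n be pairwise commuting locally nilpotent k-derivations of A, linearly independent over A, and let f ∈ A \ k with A^{D_1,…,D_n} = k[f]. For each i define 𝒫_i := {p ∈ A : D_j(p) = 0 for all j ≠ i, and D_i(p) ∈ k[f]}. Then there exists a nonzero polynomial q_i ∈ k[X] such that the image set D_i(𝒫_i) = {D_i(p) : p ∈ 𝒫_i} equals q_i(f)·k[f], the set of all multiples of q_i(f) inside k[f]. Moreover, if p_i ∈ 𝒫_i is chosen so that D_i(p_i) = g(f) with g ∈ k[X] nonzero of lowest possible degree, then D_i(p_i) is a nonzero scalar multiple of q_i(f). -/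

import Mathlib

set_option linter.unusedSectionVars false
set_option maxHeartbeats 1000000

open Polynomial

/-- A derivation is locally nilpotent if every element is killed by some iterate. -/
def Derivation.IsLocallyNilpotent {k A : Type*} [CommRing k] [CommRing A] [Algebra k A]
    (D : Derivation k A A) : Prop :=
  ∀ a : A, ∃ m : ℕ, 1 ≤ m ∧ (fun x => D x)^[m] a = 0

namespace St5
variable {k A : Type*} [Field k] [CharZero k] [CommRing A] [IsDomain A] [Algebra k A]

lemma exists_slice (Dd : Derivation k A A) (hLN : Dd.IsLocallyNilpotent) {b : A}
    (hb : Dd b ≠ 0) :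
    ∃ l : ℕ, Dd ((⇑Dd)^[l] b) ≠ 0 ∧ Dd (Dd ((⇑Dd)^[l] b)) = 0 := by
  classical
  obtain ⟨m, hm1, hm0⟩ := hLN b
  have hex : ∃ l : ℕ, (⇑Dd)^[l + 1] b = 0 := by
    refine ⟨m - 1, ?_⟩
    rwa [Nat.sub_add_cancel hm1]
  have h0 : (⇑Dd)^[Nat.find hex + 1] b = 0 := Nat.find_spec hex
  have hl₀pos : Nat.find hex ≠ 0 := by
    intro h
    rw [h] at h0
    exact hb h0
  obtain ⟨l, hl⟩ := Nat.exists_eq_succ_of_ne_zero hl₀pos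
  have hmin : ¬ (⇑Dd)^[l + 1] b = 0 := Nat.find_min hex (by omega)
  rw [hl] at h0
  refine ⟨l, ?_, ?_⟩
  · rwa [← Function.iterate_succ_apply' Dd l b]
  · rw [← Function.iterate_succ_apply' Dd l b, ← Function.iterate_succ_apply' Dd (l+1) b]
    exact h0

lemma iter_comm_deriv (Dd Ee : Derivation k A A) (h : ∀ x, Ee (Dd x) = Dd (Ee x)) :
    ∀ (m : ℕ) (x : A), Ee ((⇑Dd)^[m] x) = (⇑Dd)^[m] (Ee x) := by
  intro m
  induction m with
  | zero => intro x; rfl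
  | succ m ih =>
      intro x
      rw [Function.iterate_succ_apply, Function.iterate_succ_apply, ih (Dd x), h x]

lemma iter_mem (Dd : Derivation k A A) (W : Subalgebra k A) (hW : ∀ x ∈ W, Dd x ∈ W) :
    ∀ (m : ℕ) {x : A}, x ∈ W → (⇑Dd)^[m] x ∈ W := by
  intro m
  induction m with
  | zero => intro x hx; exact hx
  | succ m ih => intro x hx; rw [Function.iterate_succ_apply]; exact ih (hW x hx)

lemma deriv_pow_zero (Dd : Derivation k A A) {t : A} (ht : Dd t = 0) (M : ℕ) :
    Dd (t ^ M) = 0 := by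
  simp [Derivation.leibniz_pow, ht]

lemma deriv_mul_c (Dd : Derivation k A A) {t : A} (ht : Dd t = 0) (M : ℕ) (x : A) :
    Dd (t ^ M * x) = t ^ M * Dd x := by
  rw [Derivation.leibniz, deriv_pow_zero Dd ht M]
  simp [smul_eq_mul]

lemma iter_mul_c (Dd : Derivation k A A) {t : A} (ht : Dd t = 0) (M : ℕ) :
    ∀ (m : ℕ) (x : A), (⇑Dd)^[m] (t ^ M * x) = t ^ M * (⇑Dd)^[m] x := by
  intro m
  induction m with
  | zero => intro x; rfl
  | succ m ih =>
      intro x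
      rw [Function.iterate_succ_apply, Function.iterate_succ_apply,
        deriv_mul_c Dd ht M x, ih]

lemma iter_sub (Dd : Derivation k A A) :
    ∀ (m : ℕ) (x y : A), (⇑Dd)^[m] (x - y) = (⇑Dd)^[m] x - (⇑Dd)^[m] y := by
  intro m
  induction m with
  | zero => intro x y; rfl
  | succ m ih =>
      intro x y
      rw [Function.iterate_succ_apply, Function.iterate_succ_apply,
        Function.iterate_succ_apply, map_sub, ih]

lemma iter_smulk (Dd : Derivation k A A) (c : k) :
    ∀ (m : ℕ) (x : A), (⇑Dd)^[m] (c • x) = c • (⇑Dd)^[m] x := by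
  intro m
  induction m with
  | zero => intro x; rfl
  | succ m ih =>
      intro x
      rw [Function.iterate_succ_apply, Function.iterate_succ_apply,
        Derivation.map_smul, ih]

lemma iter_rpow (Dd : Derivation k A A) {r t b : A} (hr : Dd r = t) (ht : Dd t = 0)
    (hb : Dd b = 0) (M : ℕ) :
    ∀ j : ℕ, (⇑Dd)^[j] (r ^ M * b) = (M.descFactorial j) • (r ^ (M - j) * (t ^ j * b)) := by
  intro j
  induction j with
  | zero => simp
  | succ j ih =>
      rw [Function.iterate_succ_apply', ih, Derivation.map_smul_of_tower,
        Derivation.leibniz, deriv_mul_c Dd ht j b, hb, mul_zero, smul_zero, zero_add,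
        Derivation.leibniz_pow, hr, Nat.descFactorial_succ, ← Nat.sub_sub]
      simp only [smul_eq_mul, nsmul_eq_mul, Nat.cast_mul]
      push_cast
      ring

lemma exists_pow_mul_mem_adjoin (Dd : Derivation k A A) (W : Subalgebra k A)
    (hW : ∀ x ∈ W, Dd x ∈ W) {r : A} (hrW : r ∈ W) (ht : Dd (Dd r) = 0) :
    ∀ (m : ℕ) (a : A), a ∈ W → (⇑Dd)^[m + 1] a = 0 →
      ∃ M : ℕ, (Dd r) ^ M * a ∈ Algebra.adjoin k (insert r {x | x ∈ W ∧ Dd x = 0}) := by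
  set t := Dd r with htdef
  have htW : t ∈ W := hW r hrW
  intro m
  induction m with
  | zero =>
      intro a haW ha
      refine ⟨0, ?_⟩
      rw [pow_zero, one_mul]
      exact Algebra.subset_adjoin (Set.mem_insert_iff.2 (Or.inr ⟨haW, by simpa using ha⟩))
  | succ m ih =>
      intro a haW ha
      set b := (⇑Dd)^[m + 1] a with hbdef
      have hbW : b ∈ W := iter_mem Dd W hW (m + 1) haW
      have hbD : Dd b = 0 := by
        rw [hbdef, ← Function.iterate_succ_apply' Dd (m + 1) a]; exact ha
      set c : k := ((m + 1).factorial : k) with hcdef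
      have hc : c ≠ 0 := Nat.cast_ne_zero.2 (Nat.factorial_ne_zero _)
      set a₂ := c • (t ^ (m + 1) * a) - r ^ (m + 1) * b with ha₂def
      have ha₂W : a₂ ∈ W := by
        apply sub_mem
        · exact Subalgebra.smul_mem W (mul_mem (pow_mem htW (m + 1)) haW) c
        · exact mul_mem (pow_mem hrW (m + 1)) hbW
      have ha₂ : (⇑Dd)^[m + 1] a₂ = 0 := by
        rw [ha₂def, iter_sub, iter_smulk, iter_mul_c Dd ht (m + 1),
          iter_rpow Dd rfl ht hbD (m + 1) (m + 1)]
        rw [Nat.descFactorial_self, Nat.sub_self, pow_zero, one_mul, ← hbdef,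
          hcdef, Nat.cast_smul_eq_nsmul k]
        exact sub_self _
      obtain ⟨M', hM'⟩ := ih a₂ ha₂W ha₂
      refine ⟨M' + (m + 1), ?_⟩
      have key : c • (t ^ (M' + (m + 1)) * a) = t ^ M' * a₂ + t ^ M' * (r ^ (m + 1) * b) := by
        rw [ha₂def, mul_sub, mul_smul_comm, sub_add_cancel, ← mul_assoc, ← pow_add]
      have htA : t ∈ Algebra.adjoin k (insert r {x | x ∈ W ∧ Dd x = 0}) :=
        Algebra.subset_adjoin (Set.mem_insert_iff.2 (Or.inr ⟨htW, ht⟩))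
      have hrA : r ∈ Algebra.adjoin k (insert r {x | x ∈ W ∧ Dd x = 0}) :=
        Algebra.subset_adjoin (Set.mem_insert_iff.2 (Or.inl rfl))
      have hbA : b ∈ Algebra.adjoin k (insert r {x | x ∈ W ∧ Dd x = 0}) :=
        Algebra.subset_adjoin (Set.mem_insert_iff.2 (Or.inr ⟨hbW, hbD⟩))
      have hmem : t ^ M' * a₂ + t ^ M' * (r ^ (m + 1) * b) ∈
          Algebra.adjoin k (insert r {x | x ∈ W ∧ Dd x = 0}) :=
        add_mem hM' (mul_mem (pow_mem htA M') (mul_mem (pow_mem hrA (m + 1)) hbA))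
      have heq : t ^ (M' + (m + 1)) * a = c⁻¹ • (t ^ M' * a₂ + t ^ M' * (r ^ (m + 1) * b)) := by
        rw [← key, smul_smul, inv_mul_cancel₀ hc, one_smul]
      rw [heq]
      exact Subalgebra.smul_mem _ hmem _

lemma key_ext (Dd : Derivation k A A) (hLN : Dd.IsLocallyNilpotent) (W : Subalgebra k A)
    (hW : ∀ x ∈ W, Dd x ∈ W) {r : A} (hrW : r ∈ W) (hr : Dd r ≠ 0) (hr2 : Dd (Dd r) = 0)
    (Ee : Derivation k A A) (hE : ∀ x ∈ W, Dd x = 0 → Ee x = 0) :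
    ∀ a ∈ W, Dd r * Ee a = Ee r * Dd a := by
  set t := Dd r with htdef
  set F : Derivation k A A := t • Ee - (Ee r) • Dd with hF
  have hFt : F t = 0 := by
    have h1 : Ee t = 0 := hE t (hW r hrW) hr2
    rw [hF, Derivation.sub_apply, Derivation.smul_apply, Derivation.smul_apply, h1, hr2]
    simp
  have hF0 : Set.EqOn ⇑F ⇑(0 : Derivation k A A) (insert r {x | x ∈ W ∧ Dd x = 0}) := by
    intro x hx
    rcases Set.mem_insert_iff.1 hx with h | h
    · have hxr : x = r := h
      rw [hxr]
      show (t • Ee - (Ee r) • Dd) r = _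
      rw [Derivation.sub_apply, Derivation.smul_apply, Derivation.smul_apply]
      simp [smul_eq_mul, mul_comm, htdef]
    · obtain ⟨hxW, hx0⟩ := h
      have h1 := hE x hxW hx0
      show (t • Ee - (Ee r) • Dd) x = _
      rw [Derivation.sub_apply, Derivation.smul_apply, Derivation.smul_apply, h1, hx0]
      simp
  have hFadj := Derivation.eqOn_adjoin (R := k) hF0
  intro a haW
  obtain ⟨m, hm1, hm0⟩ := hLN a
  obtain ⟨m', rfl⟩ : ∃ m', m = m' + 1 := ⟨m - 1, by omega⟩
  obtain ⟨M, hM⟩ := exists_pow_mul_mem_adjoin Dd W hW hrW hr2 m' a haW hm0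
  have hzero : F (t ^ M * a) = 0 := by
    have h2 := hFadj hM
    simpa using h2
  rw [deriv_mul_c F hFt M a] at hzero
  have hFa : F a = 0 := by
    rcases mul_eq_zero.1 hzero with h | h
    · exact absurd h (pow_ne_zero M hr)
    · exact h
  have h3 : t * Ee a - Ee r * Dd a = 0 := by
    rw [hF] at hFa
    rw [Derivation.sub_apply, Derivation.smul_apply, Derivation.smul_apply,
      smul_eq_mul, smul_eq_mul] at hFa
    exact hFa
  exact sub_eq_zero.mp h3

lemma iter_zero (Dd : Derivation k A A) (m : ℕ) : (⇑Dd)^[m] (0 : A) = 0 :=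
  Function.iterate_fixed (map_zero Dd) m

lemma sum_deriv_apply {ι : Type*} (s : Finset ι) (G : ι → Derivation k A A) (x : A) :
    (∑ j ∈ s, G j) x = ∑ j ∈ s, G j x := by
  classical
  induction s using Finset.induction_on with
  | empty => simp
  | insert _ _ h ih => rw [Finset.sum_insert h, Finset.sum_insert h, Derivation.add_apply, ih]

def kerIn (Dd : Derivation k A A) (W : Subalgebra k A) : Subalgebra k A where
  carrier := {x | x ∈ W ∧ Dd x = 0}
  mul_mem' := by
    rintro a b ⟨haW, ha⟩ ⟨hbW, hb⟩
    exact ⟨mul_mem haW hbW, by rw [Derivation.leibniz, ha, hb]; simp⟩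
  add_mem' := by
    rintro a b ⟨haW, ha⟩ ⟨hbW, hb⟩
    exact ⟨add_mem haW hbW, by rw [map_add, ha, hb, add_zero]⟩
  one_mem' := ⟨one_mem W, Derivation.map_one_eq_zero Dd⟩
  zero_mem' := ⟨zero_mem W, map_zero Dd⟩
  algebraMap_mem' := fun c => ⟨Subalgebra.algebraMap_mem W c, Derivation.map_algebraMap Dd c⟩

lemma mem_kerIn {Dd : Derivation k A A} {W : Subalgebra k A} {x : A} :
    x ∈ kerIn Dd W ↔ x ∈ W ∧ Dd x = 0 := Iff.rfl

lemma rec_lemma {n : ℕ} (D : Fin n → Derivation k A A)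
    (hLN : ∀ j, (D j).IsLocallyNilpotent)
    (hcomm : ∀ i j, ∀ x : A, D i (D j x) = D j (D i x)) (i : Fin n) (S : Finset (Fin n)) :
    ∀ (W : Subalgebra k A), (∀ j, ∀ x ∈ W, D j x ∈ W) →
      (∀ x ∈ W, (∀ j ∈ S, D j x = 0) → D i x = 0) →
      ∃ t : A, t ≠ 0 ∧ ∃ u : Fin n → A, ∀ x ∈ W, t * D i x = ∑ j ∈ S, u j * D j x := by
  classical
  induction S using Finset.induction_on with
  | empty =>
      intro W hW hK
      exact ⟨1, one_ne_zero, 0, fun x hx => by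
        rw [hK x hx (by simp), Finset.sum_empty, mul_zero]⟩
  | @insert j₁ S' hj₁ ih =>
      intro W hW hK
      by_cases hcase : ∀ x ∈ W, D j₁ x = 0
      · obtain ⟨t', ht', u', hu'⟩ := ih W hW (fun x hx h => hK x hx (fun j hj => by
          rcases Finset.mem_insert.1 hj with h1 | h1
          · rw [h1]; exact hcase x hx
          · exact h j h1))
        refine ⟨t', ht', Function.update u' j₁ 0, fun x hx => ?_⟩
        rw [Finset.sum_insert hj₁, Function.update_self, zero_mul, zero_add, hu' x hx]
        exact Finset.sum_congr rfl (fun j hj => by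
          rw [Function.update_of_ne (by rintro rfl; exact hj₁ hj)])
      · push_neg at hcase
        obtain ⟨b, hbW, hb⟩ := hcase
        obtain ⟨l, hl1, hl2⟩ := exists_slice (D j₁) (hLN j₁) hb
        set r := (⇑(D j₁))^[l] b with hrdef
        have hrW : r ∈ W := iter_mem (D j₁) W (hW j₁) l hbW
        have hW₁stab : ∀ j, ∀ x ∈ kerIn (D j₁) W, D j x ∈ kerIn (D j₁) W := by
          intro j x hx
          obtain ⟨hxW, hx0⟩ := mem_kerIn.1 hx
          exact mem_kerIn.2 ⟨hW j x hxW, by rw [hcomm j₁ j x, hx0, map_zero]⟩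
        have hK₁ : ∀ x ∈ kerIn (D j₁) W, (∀ j ∈ S', D j x = 0) → D i x = 0 := by
          intro x hx h
          obtain ⟨hxW, hx0⟩ := mem_kerIn.1 hx
          exact hK x hxW (fun j hj => by
            rcases Finset.mem_insert.1 hj with h1 | h1
            · rw [h1]; exact hx0
            · exact h j h1)
        obtain ⟨t', ht', u', hu'⟩ := ih (kerIn (D j₁) W) hW₁stab hK₁
        set E : Derivation k A A := t' • D i - ∑ j ∈ S', u' j • D j with hE
        have hEx : ∀ x : A, E x = t' * D i x - ∑ j ∈ S', u' j * D j x := by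
          intro x
          rw [hE]
          show (t' • D i - ∑ j ∈ S', u' j • D j) x = _
          rw [Derivation.sub_apply, Derivation.smul_apply, sum_deriv_apply, smul_eq_mul]
          rfl
        have hEker : ∀ x ∈ W, D j₁ x = 0 → E x = 0 := by
          intro x hxW hx0
          rw [hEx x, sub_eq_zero]
          exact hu' x (mem_kerIn.2 ⟨hxW, hx0⟩)
        have hkey := key_ext (D j₁) (hLN j₁) W (hW j₁) hrW hl1 hl2 E hEker
        refine ⟨D j₁ r * t', mul_ne_zero hl1 ht',
          Function.update (fun j => D j₁ r * u' j) j₁ (E r), fun x hx => ?_⟩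
        have h2 := hkey x hx
        rw [hEx x] at h2
        rw [Finset.sum_insert hj₁, Function.update_self]
        have hsum : ∑ j ∈ S', Function.update (fun j => D j₁ r * u' j) j₁ (E r) j * D j x
            = D j₁ r * ∑ j ∈ S', u' j * D j x := by
          rw [Finset.mul_sum]
          exact Finset.sum_congr rfl (fun j hj => by
            rw [Function.update_of_ne (by rintro rfl; exact hj₁ hj)]; ring)
        rw [hsum]
        linear_combination h2

lemma exists_good {n : ℕ} (D : Fin n → Derivation k A A)
    (hLN : ∀ j, (D j).IsLocallyNilpotent)
    (hcomm : ∀ i j, ∀ x : A, D i (D j x) = D j (D i x))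
    (hindep : ∀ a : Fin n → A, (∀ x : A, ∑ j, a j * D j x = 0) → ∀ j, a j = 0)
    (i : Fin n) :
    ∃ p : A, (∀ j, j ≠ i → D j p = 0) ∧ (∀ j, D j (D i p) = 0) ∧ D i p ≠ 0 := by
  classical
  by_cases hall : ∀ b : A, (∀ j, j ≠ i → D j b = 0) → D i b = 0
  · exfalso
    obtain ⟨t, ht, u, hu⟩ := rec_lemma D hLN hcomm i (Finset.univ.erase i) ⊤
      (fun j x _ => Algebra.mem_top)
      (fun x _ h => hall x (fun j hj => h j (Finset.mem_erase.2 ⟨hj, Finset.mem_univ j⟩)))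
    set a : Fin n → A := Function.update (fun j => - u j) i t with hadef
    have hsum : ∀ x : A, ∑ j, a j * D j x = 0 := by
      intro x
      have huniv : (Finset.univ : Finset (Fin n)) = insert i (Finset.univ.erase i) :=
        (Finset.insert_erase (Finset.mem_univ i)).symm
      rw [huniv, Finset.sum_insert (Finset.notMem_erase i _)]
      have ha_i : a i = t := by rw [hadef, Function.update_self]
      have hrest : ∑ j ∈ Finset.univ.erase i, a j * D j x
          = ∑ j ∈ Finset.univ.erase i, - (u j * D j x) := by
        refine Finset.sum_congr rfl (fun j hj => ?_)
        rw [hadef, Function.update_of_ne (Finset.mem_erase.1 hj).1, neg_mul]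
      rw [ha_i, hrest, Finset.sum_neg_distrib, ← sub_eq_add_neg, sub_eq_zero]
      exact hu x Algebra.mem_top
    have hai := hindep a hsum i
    rw [hadef, Function.update_self] at hai
    exact ht hai
  · push_neg at hall
    obtain ⟨b, hbj, hbne⟩ := hall
    obtain ⟨l, hl1, hl2⟩ := exists_slice (D i) (hLN i) hbne
    have hjp : ∀ j, j ≠ i → D j ((⇑(D i))^[l] b) = 0 := by
      intro j hj
      rw [iter_comm_deriv (D i) (D j) (fun x => hcomm j i x) l b, hbj j hj, iter_zero]
    refine ⟨(⇑(D i))^[l] b, hjp, ?_, hl1⟩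
    intro j
    by_cases hji : j = i
    · rw [hji]; exact hl2
    · rw [hcomm j i _, hjp j hji, map_zero]
end St5

theorem statement5 (k : Type*) [Field k] [CharZero k] (n : ℕ) (hn : 1 ≤ n)
    (A : Type*) [CommRing A] [IsDomain A] [UniqueFactorizationMonoid A] [Algebra k A]
    (htrdeg : ∃ b : Fin (n + 1) → FractionRing A, IsTranscendenceBasis k b)
    (hunits : ∀ a : A, IsUnit a → ∃ c : k, algebraMap k A c = a)
    (D : Fin n → Derivation k A A)
    (hLN : ∀ i, (D i).IsLocallyNilpotent)
    (hcomm : ∀ i j, ∀ x : A, D i (D j x) = D j (D i x))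
    (hindep : ∀ a : Fin n → A,
      (∀ x : A, ∑ i, a i * D i x = 0) → ∀ i, a i = 0)
    (f : A) (hf : f ∉ (algebraMap k A).range)
    (hker : {a : A | ∀ i, D i a = 0} = (Algebra.adjoin k {f} : Subalgebra k A))
    (P : Fin n → Set A)
    (hP : ∀ i, P i = {p : A | (∀ j, j ≠ i → D j p = 0) ∧
      D i p ∈ Algebra.adjoin k {f}}) :
    ∀ i, ∃ q : Polynomial k, q ≠ 0 ∧
      ((D i : A → A) '' P i =
        {x : A | ∃ g : Polynomial k, x = Polynomial.aeval f q * Polynomial.aeval f g}) ∧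
      (∀ p ∈ P i, ∀ g : Polynomial k, g ≠ 0 → D i p = Polynomial.aeval f g →
        (∀ p' ∈ P i, ∀ g' : Polynomial k, g' ≠ 0 → D i p' = Polynomial.aeval f g' →
          g.degree ≤ g'.degree) →
        ∃ c : k, c ≠ 0 ∧ D i p = c • (Polynomial.aeval f q : A)) := by
  intro i
  classical
  have hkerf : ∀ (g : Polynomial k) (j : Fin n), D j (aeval f g) = 0 := by
    intro g j
    have hmem : (aeval f g : A) ∈ Algebra.adjoin k {f} := by
      rw [Algebra.adjoin_singleton_eq_range_aeval]; exact ⟨g, rfl⟩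
    have h2 : aeval f g ∈ {a : A | ∀ i, D i a = 0} := by rw [hker]; exact hmem
    exact h2 j
  have hPmul : ∀ (c : Polynomial k) (p : A), p ∈ P i →
      (aeval f c * p ∈ P i ∧ D i (aeval f c * p) = aeval f c * D i p) := by
    intro c p hp
    rw [hP i] at hp
    obtain ⟨hp1, hp2⟩ := hp
    have hD : ∀ j, D j (aeval f c * p) = aeval f c * D j p := by
      intro j
      rw [Derivation.leibniz, hkerf c j]
      simp [smul_eq_mul]
    constructor
    · rw [hP i]
      refine ⟨fun j hj => by rw [hD j, hp1 j hj, mul_zero], ?_⟩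
      rw [hD i]
      have hcf : (aeval f c : A) ∈ Algebra.adjoin k {f} := by
        rw [Algebra.adjoin_singleton_eq_range_aeval]; exact ⟨c, rfl⟩
      exact mul_mem hcf hp2
    · exact hD i
  set I : Ideal (Polynomial k) :=
    { carrier := {g : Polynomial k | ∃ p ∈ P i, D i p = aeval f g}
      add_mem' := by
        rintro g₁ g₂ ⟨p₁, hp₁, he₁⟩ ⟨p₂, hp₂, he₂⟩
        refine ⟨p₁ + p₂, ?_, by rw [map_add, he₁, he₂, map_add]⟩
        rw [hP i] at hp₁ hp₂ ⊢
        exact ⟨fun j hj => by rw [map_add, hp₁.1 j hj, hp₂.1 j hj, add_zero],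
          by rw [map_add]; exact add_mem hp₁.2 hp₂.2⟩
      zero_mem' := ⟨0, by
        rw [hP i]
        exact ⟨fun j _ => map_zero _, by rw [map_zero]; exact zero_mem _⟩,
        by rw [map_zero, map_zero]⟩
      smul_mem' := by
        intro c g hg
        obtain ⟨p, hp, he⟩ := hg
        refine ⟨aeval f c * p, (hPmul c p hp).1, ?_⟩
        rw [(hPmul c p hp).2, he, smul_eq_mul, map_mul] } with hIdef
  have hmemI : ∀ g : Polynomial k, g ∈ I ↔ ∃ p ∈ P i, D i p = aeval f g := fun g => Iff.rfl
  obtain ⟨p₀, hp₀j, hp₀ker, hp₀ne⟩ := St5.exists_good D hLN hcomm hindep i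
  have hp₀adj : D i p₀ ∈ Algebra.adjoin k {f} := by
    have h4 : D i p₀ ∈ {a : A | ∀ i, D i a = 0} := hp₀ker
    rw [hker] at h4
    exact h4
  have hp₀P : p₀ ∈ P i := by
    rw [hP i]
    exact ⟨hp₀j, hp₀adj⟩
  obtain ⟨g₀, hg₀⟩ : ∃ g₀ : Polynomial k, D i p₀ = aeval f g₀ := by
    rw [Algebra.adjoin_singleton_eq_range_aeval] at hp₀adj
    obtain ⟨g₀, hg₀⟩ := hp₀adj
    exact ⟨g₀, hg₀.symm⟩
  have hg₀I : g₀ ∈ I := ⟨p₀, hp₀P, hg₀⟩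
  have hg₀ne : g₀ ≠ 0 := by
    rintro rfl
    rw [map_zero] at hg₀
    exact hp₀ne hg₀
  have hspan : Ideal.span {Submodule.IsPrincipal.generator I} = I :=
    Ideal.span_singleton_generator I
  set q := Submodule.IsPrincipal.generator I with hqdef
  have hq0 : q ≠ 0 := by
    intro hq
    rw [hq] at hspan
    have h3 : g₀ ∈ Ideal.span ({0} : Set (Polynomial k)) := by rw [hspan]; exact hg₀I
    rw [Ideal.span_singleton_eq_bot.2 rfl] at h3
    exact hg₀ne (Ideal.mem_bot.1 h3)
  have hqI : q ∈ I := by rw [← hspan]; exact Ideal.subset_span (Set.mem_singleton q)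
  obtain ⟨pq, hpqP, hDq⟩ := hqI
  refine ⟨q, hq0, ?_, ?_⟩
  · ext x
    constructor
    · rintro ⟨p, hpP, rfl⟩
      have hadj : D i p ∈ Algebra.adjoin k {f} := by rw [hP i] at hpP; exact hpP.2
      rw [Algebra.adjoin_singleton_eq_range_aeval] at hadj
      obtain ⟨g₁, hgg⟩ := hadj
      have hg₁I : g₁ ∈ I := ⟨p, hpP, hgg.symm⟩
      rw [← hspan, Ideal.mem_span_singleton] at hg₁I
      obtain ⟨g, rfl⟩ := hg₁I
      refine ⟨g, ?_⟩
      rw [← hgg, map_mul]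
      rfl
    · rintro ⟨g, hx⟩
      refine ⟨aeval f g * pq, (hPmul g pq hpqP).1, ?_⟩
      rw [(hPmul g pq hpqP).2, hDq, hx]
      ring
  · intro p hpP g hg hDp hmin
    have hgI : g ∈ I := ⟨p, hpP, hDp⟩
    rw [← hspan, Ideal.mem_span_singleton] at hgI
    obtain ⟨h, rfl⟩ := hgI
    have hh0 : h ≠ 0 := by rintro rfl; rw [mul_zero] at hg; exact hg rfl
    have hdeg : (q * h).degree ≤ q.degree := hmin pq hpqP q hq0 hDq
    have hnd : (q * h).natDegree ≤ q.natDegree := Polynomial.natDegree_le_natDegree hdeg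
    rw [Polynomial.natDegree_mul hq0 hh0] at hnd
    have hh_nd : h.natDegree = 0 := by omega
    have hhc : h = Polynomial.C (h.coeff 0) := Polynomial.eq_C_of_natDegree_eq_zero hh_nd
    refine ⟨h.coeff 0, ?_, ?_⟩
    · intro hc
      rw [hc, map_zero] at hhc
      exact hh0 hhc
    · rw [hDp, map_mul]
      conv_lhs => rw [hhc]
      rw [Polynomial.aeval_C, Algebra.smul_def, mul_comm]
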